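/- Let d ≥ 2 and let Ω : ℝ^d → ℝ be differentiable. If Ω(w + p) ≥ Ω(w) for all w, p ∈ ℝ^d with ⟨w, p⟩ = 0, then there exists a nondecreasing function h : ℝ≥0 → ℝ such that Ω(w) = h(⟨w, w⟩) for all w ∈ ℝ^d. -/

import Mathlib

open scoped RealInnerProductSpace

lemma exists_unit_orthogonal {d : ℕ} (hd : 2 ≤ d) (e : EuclideanSpace ℝ (Fin d)) :
    ∃ f : EuclideanSpace ℝ (Fin d), ‖f‖ = 1 ∧ ⟪e, f⟫ = 0 := by
  have hbot : (ℝ ∙ e)ᗮ ≠ ⊥ := by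
    intro h
    have h1 : Module.finrank ℝ (ℝ ∙ e) + Module.finrank ℝ (ℝ ∙ e)ᗮ
        = Module.finrank ℝ (EuclideanSpace ℝ (Fin d)) :=
      (ℝ ∙ e).finrank_add_finrank_orthogonal
    have h2 : Module.finrank ℝ (EuclideanSpace ℝ (Fin d)) = d := finrank_euclideanSpace_fin
    have h3 : Module.finrank ℝ (ℝ ∙ e) ≤ 1 := by
      simpa using finrank_span_le_card ({e} : Set (EuclideanSpace ℝ (Fin d)))
    rw [h, finrank_bot] at h1
    omega
  obtain ⟨x, hx, hx0⟩ := Submodule.exists_mem_ne_zero_of_ne_bot hbot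
  refine ⟨‖x‖⁻¹ • x, ?_, ?_⟩
  · rw [norm_smul, norm_inv, norm_norm, inv_mul_cancel₀ (norm_ne_zero_iff.2 hx0)]
  · rw [real_inner_smul_right,
      Submodule.mem_orthogonal_singleton_iff_inner_right.mp hx, mul_zero]

lemma fderiv_orth {d : ℕ} (Ω : EuclideanSpace ℝ (Fin d) → ℝ)
    (hdiff : Differentiable ℝ Ω)
    (hmono : ∀ w p : EuclideanSpace ℝ (Fin d), ⟪w, p⟫ = 0 → Ω w ≤ Ω (w + p))
    (w p : EuclideanSpace ℝ (Fin d)) (hp : ⟪w, p⟫ = 0) : fderiv ℝ Ω w p = 0 := by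
  have hγ : HasDerivAt (fun t : ℝ => w + t • p) p 0 := by
    simpa using ((hasDerivAt_id (0:ℝ)).smul_const p).const_add w
  have hc : HasDerivAt (fun t : ℝ => Ω (w + t • p)) (fderiv ℝ Ω w p) 0 := by
    have h := (hdiff (w + (0:ℝ) • p)).hasFDerivAt.comp_hasDerivAt (0:ℝ) hγ
    rw [zero_smul, add_zero] at h
    exact h
  have hmin : IsLocalMin (fun t : ℝ => Ω (w + t • p)) 0 := by
    apply Filter.Eventually.of_forall
    intro t
    have ht : ⟪w, t • p⟫ = (0:ℝ) := by rw [real_inner_smul_right, hp, mul_zero]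
    simpa using hmono w (t • p) ht
  exact hmin.hasDerivAt_eq_zero hc

lemma const_on_sphere {d : ℕ} (hd : 2 ≤ d) (Ω : EuclideanSpace ℝ (Fin d) → ℝ)
    (hdiff : Differentiable ℝ Ω)
    (hmono : ∀ w p : EuclideanSpace ℝ (Fin d), ⟪w, p⟫ = 0 → Ω w ≤ Ω (w + p))
    (u v : EuclideanSpace ℝ (Fin d)) (huv : ‖u‖ = ‖v‖) : Ω u = Ω v := by
  rcases eq_or_ne ‖u‖ 0 with hr | hr
  · rw [norm_eq_zero.mp hr, norm_eq_zero.mp (huv ▸ hr : ‖v‖ = 0)]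
  set r := ‖u‖ with hrdef
  have hrpos : 0 < r := lt_of_le_of_ne (norm_nonneg u) (Ne.symm hr)
  set e : EuclideanSpace ℝ (Fin d) := r⁻¹ • u with he
  have hee : ‖e‖ = 1 := by
    rw [he, norm_smul, norm_inv, norm_norm, inv_mul_cancel₀ hr]
  set c : ℝ := ⟪e, v⟫ with hc
  set v' : EuclideanSpace ℝ (Fin d) := v - c • e with hv'
  have hee2 : ⟪e, e⟫ = (1:ℝ) := by
    rw [real_inner_self_eq_norm_sq, hee]; norm_num
  have hev' : ⟪e, v'⟫ = 0 := by
    rw [hv', inner_sub_right, real_inner_smul_right, hee2, mul_one, ← hc, sub_self]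
  obtain ⟨f, hf1, hef, hvf⟩ : ∃ f : EuclideanSpace ℝ (Fin d),
      ‖f‖ = 1 ∧ ⟪e, f⟫ = 0 ∧ v' = ‖v'‖ • f := by
    rcases eq_or_ne v' 0 with h0 | h0
    · obtain ⟨f, hf1, hef⟩ := exists_unit_orthogonal hd e
      exact ⟨f, hf1, hef, by rw [h0, norm_zero, zero_smul]⟩
    · refine ⟨‖v'‖⁻¹ • v', ?_, ?_, ?_⟩
      · rw [norm_smul, norm_inv, norm_norm, inv_mul_cancel₀ (norm_ne_zero_iff.2 h0)]
      · rw [real_inner_smul_right, hev', mul_zero]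
      · rw [smul_smul, mul_inv_cancel₀ (norm_ne_zero_iff.2 h0), one_smul]
  have hff : ⟪f, f⟫ = (1:ℝ) := by
    rw [real_inner_self_eq_norm_sq, hf1]; norm_num
  have hfe : ⟪f, e⟫ = (0:ℝ) := by rw [real_inner_comm]; exact hef
  set s : ℝ := ‖v'‖ with hs
  have hsnn : 0 ≤ s := norm_nonneg _
  have hvdec : v = c • e + s • f := by rw [← hvf, hv']; abel
  have hu : u = r • e := by
    rw [he, smul_smul, mul_inv_cancel₀ hr, one_smul]
  have hcs : c ^ 2 + s ^ 2 = r ^ 2 := by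
    have : ‖v‖ ^ 2 = c ^ 2 + s ^ 2 := by
      rw [hvdec, ← real_inner_self_eq_norm_sq]
      simp only [inner_add_add_self, real_inner_smul_left, real_inner_smul_right,
        hee2, hef, hff, hfe]
      ring
    rw [← this, ← huv]
  -- the angle
  have hcr : |c / r| ≤ 1 := by
    rw [abs_div, abs_of_pos hrpos, div_le_one hrpos]
    nlinarith [abs_nonneg c, sq_abs c, hsnn]
  set α : ℝ := Real.arccos (c / r) with hα
  have hcos : Real.cos α = c / r := Real.cos_arccos (neg_le_of_abs_le hcr) (le_of_abs_le hcr)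
  have hsin : Real.sin α = s / r := by
    rw [hα, Real.sin_arccos]
    have : 1 - (c / r) ^ 2 = (s / r) ^ 2 := by
      field_simp
      nlinarith
    rw [this, Real.sqrt_sq (by positivity)]
  -- the path
  set γ : ℝ → EuclideanSpace ℝ (Fin d) :=
    fun t => (r * Real.cos t) • e + (r * Real.sin t) • f with hγ
  have hγd : ∀ t, HasDerivAt γ
      ((-(r * Real.sin t)) • e + (r * Real.cos t) • f) t := by
    intro t
    apply HasDerivAt.add
    · simpa [mul_comm, mul_assoc, neg_mul, mul_neg] using
        (((Real.hasDerivAt_cos t).const_mul r).smul_const e)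
    · simpa [mul_comm, mul_assoc] using
        (((Real.hasDerivAt_sin t).const_mul r).smul_const f)
  have hkey : ∀ t, HasDerivAt (fun t => Ω (γ t)) 0 t := by
    intro t
    have horth : ⟪γ t, (-(r * Real.sin t)) • e + (r * Real.cos t) • f⟫ = (0:ℝ) := by
      rw [hγ]
      simp only [inner_add_left, inner_add_right,
        real_inner_smul_left, real_inner_smul_right, hee2, hef, hff, hfe]
      ring
    have h := (hdiff (γ t)).hasFDerivAt.comp_hasDerivAt t (hγd t)
    rwa [fderiv_orth Ω hdiff hmono _ _ horth] at h
  have hconst : Ω (γ 0) = Ω (γ α) := by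
    have hdg : ∀ t, deriv (fun t => Ω (γ t)) t = 0 := fun t => (hkey t).deriv
    have hdgd : Differentiable ℝ (fun t => Ω (γ t)) :=
      fun t => (hkey t).differentiableAt
    exact is_const_of_deriv_eq_zero hdgd hdg 0 α
  have hγ0 : γ 0 = u := by
    show (r * Real.cos 0) • e + (r * Real.sin 0) • f = u
    rw [hu]; simp
  have hγα : γ α = v := by
    show (r * Real.cos α) • e + (r * Real.sin α) • f = v
    have h1 : r * (c / r) = c := by rw [mul_comm]; exact div_mul_cancel₀ c hr
    have h2 : r * (s / r) = s := by rw [mul_comm]; exact div_mul_cancel₀ s hr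
    rw [hcos, hsin, h1, h2, hvdec]
  rw [← hγ0, ← hγα, hconst]

lemma mono_norm {d : ℕ} (hd : 2 ≤ d) (Ω : EuclideanSpace ℝ (Fin d) → ℝ)
    (hdiff : Differentiable ℝ Ω)
    (hmono : ∀ w p : EuclideanSpace ℝ (Fin d), ⟪w, p⟫ = 0 → Ω w ≤ Ω (w + p))
    (u v : EuclideanSpace ℝ (Fin d)) (huv : ‖u‖ ≤ ‖v‖) : Ω u ≤ Ω v := by
  rcases eq_or_ne ‖v‖ 0 with hR | hR
  · have h0 : ‖u‖ = 0 := le_antisymm (hR ▸ huv) (norm_nonneg u)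
    rw [norm_eq_zero.mp h0, norm_eq_zero.mp hR]
  have hRpos : 0 < ‖v‖ := lt_of_le_of_ne (norm_nonneg v) (Ne.symm hR)
  set r : ℝ := ‖u‖ with hrdef
  set R : ℝ := ‖v‖ with hRdef
  have hrnn : 0 ≤ r := norm_nonneg u
  set e : EuclideanSpace ℝ (Fin d) := R⁻¹ • v with he
  have hee : ‖e‖ = 1 := by
    rw [he, norm_smul, norm_inv, norm_norm, inv_mul_cancel₀ hR]
  have hee2 : ⟪e, e⟫ = (1:ℝ) := by
    rw [real_inner_self_eq_norm_sq, hee]; norm_num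
  obtain ⟨f, hf1, hef⟩ := exists_unit_orthogonal hd e
  have hff : ⟪f, f⟫ = (1:ℝ) := by
    rw [real_inner_self_eq_norm_sq, hf1]; norm_num
  have hfe : ⟪f, e⟫ = (0:ℝ) := by rw [real_inner_comm]; exact hef
  have hv : v = R • e := by
    rw [he, smul_smul, mul_inv_cancel₀ hR, one_smul]
  set s : ℝ := Real.sqrt (r ^ 2 - r ^ 4 / R ^ 2) with hs
  have harg : 0 ≤ r ^ 2 - r ^ 4 / R ^ 2 := by
    rw [sub_nonneg, div_le_iff₀ (by positivity)]
    nlinarith [mul_self_le_mul_self hrnn huv, sq_nonneg r]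
  have hs2 : s ^ 2 = r ^ 2 - r ^ 4 / R ^ 2 := Real.sq_sqrt harg
  set w' : EuclideanSpace ℝ (Fin d) := (r ^ 2 / R) • e + s • f with hw'
  have hw'2 : ⟪w', w'⟫ = r ^ 2 := by
    rw [hw', inner_add_add_self]
    simp only [real_inner_smul_left, real_inner_smul_right, hee2, hef, hff, hfe]
    simp only [mul_one, mul_zero, add_zero, zero_add]
    have hss : s * s = r ^ 2 - r ^ 4 / R ^ 2 := by rw [← sq]; exact hs2
    rw [hss]
    field_simp
    ring
  have hw'norm : ‖w'‖ = r := by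
    have h1 : ‖w'‖ ^ 2 = r ^ 2 := by rw [← real_inner_self_eq_norm_sq, hw'2]
    calc ‖w'‖ = Real.sqrt (‖w'‖ ^ 2) := (Real.sqrt_sq (norm_nonneg _)).symm
    _ = Real.sqrt (r ^ 2) := by rw [h1]
    _ = r := Real.sqrt_sq hrnn
  have horth : ⟪w', v - w'⟫ = (0:ℝ) := by
    rw [inner_sub_right, hw'2, hv, hw']
    simp only [inner_add_left, real_inner_smul_left, real_inner_smul_right, hee2, hfe]
    field_simp
    ring
  calc Ω u = Ω w' := const_on_sphere hd Ω hdiff hmono u w' (by rw [hw'norm])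
  _ ≤ Ω (w' + (v - w')) := hmono w' (v - w') horth
  _ = Ω v := by rw [add_sub_cancel]

theorem stmt_6 {d : ℕ} (hd : 2 ≤ d) (Ω : EuclideanSpace ℝ (Fin d) → ℝ)
    (hdiff : Differentiable ℝ Ω)
    (hmono : ∀ w p : EuclideanSpace ℝ (Fin d), inner ℝ w p = (0 : ℝ) → Ω w ≤ Ω (w + p)) :
    ∃ h : NNReal → ℝ, Monotone h ∧
      ∀ w : EuclideanSpace ℝ (Fin d), Ω w = h ⟨inner ℝ w w, real_inner_self_nonneg⟩ := by
  have hd0 : 0 < d := by omega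
  set e₀ : EuclideanSpace ℝ (Fin d) := EuclideanSpace.single (⟨0, hd0⟩ : Fin d) (1:ℝ)
    with he₀
  have he₀n : ‖e₀‖ = 1 := by rw [he₀, EuclideanSpace.norm_single, norm_one]
  have hnorm : ∀ t : NNReal, ‖Real.sqrt t • e₀‖ = Real.sqrt t := by
    intro t
    rw [norm_smul, he₀n, mul_one, Real.norm_eq_abs, abs_of_nonneg (Real.sqrt_nonneg _)]
  refine ⟨fun t => Ω (Real.sqrt t • e₀), ?_, ?_⟩
  · intro t t' htt
    apply mono_norm hd Ω hdiff hmono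
    rw [hnorm, hnorm]
    exact Real.sqrt_le_sqrt (by exact_mod_cast htt)
  · intro w
    apply const_on_sphere hd Ω hdiff hmono
    refine Eq.trans ?_ (hnorm ⟨inner ℝ w w, real_inner_self_nonneg⟩).symm
    have : (inner ℝ w w : ℝ) = ‖w‖ ^ 2 := real_inner_self_eq_norm_sq w
    simp only [NNReal.coe_mk, this]
    exact (Real.sqrt_sq (norm_nonneg w)).symm
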